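/- Suppose I ⊆ (0,1) is an open interval with f(s) > 0 for all s ∈ I. Then C restricted to I is a strictly increasing continuous bijection onto the open interval C(I), and the cost-parameterized quality g := U ∘ (C|_I)⁻¹ is differentiable on C(I) with slope g'(C(τ)) = (m_H(τ) − m_L(τ)) / c_H for every τ ∈ I; that is, the slope of the cost-quality frontier at the point with threshold τ equals the escalation benefit at τ divided by the expensive model's expected cost. -/

import Mathlib

/-- On an open interval `I = (a,b) ⊆ (0,1)` with `f > 0`, the
cost `C` restricted to `I` is a strictly increasing continuous bijection onto
its image `C '' I`, and any cost-parameterized quality `g` with `g ∘ C = U` on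
`I` (i.e. `g = U ∘ (C|_I)⁻¹` on `C '' I`) is differentiable at every point
`C τ`, `τ ∈ I`, with slope `(mH τ - mL τ) / cH`. -/
theorem two_model_cascade_frontier_slope
    (f mL mH : ℝ → ℝ) (hf : Continuous f)
    (hf0 : ∀ s ∈ Set.Icc (0:ℝ) 1, 0 ≤ f s)
    (hfint : (∫ s in (0:ℝ)..1, f s) = 1)
    (hmL : Continuous mL) (hmH : Continuous mH)
    (cL cH : ℝ) (hcL : 0 ≤ cL) (hcH : 0 < cH)
    (C U : ℝ → ℝ)
    (hC : ∀ τ, C τ = cL + cH * ∫ s in (0:ℝ)..τ, f s)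
    (hU : ∀ τ, U τ = (∫ s in (0:ℝ)..τ, mH s * f s) + ∫ s in τ..(1:ℝ), mL s * f s)
    (a b : ℝ) (hab : a < b) (hI : Set.Ioo a b ⊆ Set.Ioo (0:ℝ) 1)
    (hfpos : ∀ s ∈ Set.Ioo a b, 0 < f s) :
    StrictMonoOn C (Set.Ioo a b) ∧
    ContinuousOn C (Set.Ioo a b) ∧
    Set.BijOn C (Set.Ioo a b) (C '' Set.Ioo a b) ∧
    ∀ g : ℝ → ℝ, (∀ τ ∈ Set.Ioo a b, g (C τ) = U τ) →
      ∀ τ ∈ Set.Ioo a b, HasDerivAt g ((mH τ - mL τ) / cH) (C τ) := by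
  -- C has strict derivative cH * f τ everywhere
  have hCd : ∀ τ : ℝ, HasStrictDerivAt C (cH * f τ) τ := by
    intro τ
    have : HasStrictDerivAt (fun t => cL + cH * ∫ s in (0:ℝ)..t, f s) (cH * f τ) τ :=
      ((hf.integral_hasStrictDerivAt 0 τ).const_mul cH).const_add cL
    exact this.congr_of_eventuallyEq (Filter.Eventually.of_forall fun t => (hC t).symm)
  -- U has strict derivative (mH τ - mL τ) * f τ everywhere
  have hU' : ∀ t : ℝ, U t = (∫ s in (0:ℝ)..t, mH s * f s) +
      ((∫ s in (0:ℝ)..(1:ℝ), mL s * f s) - ∫ s in (0:ℝ)..t, mL s * f s) := by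
    intro t
    rw [hU t]
    have : (∫ s in (0:ℝ)..t, mL s * f s) + (∫ s in t..(1:ℝ), mL s * f s)
        = ∫ s in (0:ℝ)..(1:ℝ), mL s * f s :=
      intervalIntegral.integral_add_adjacent_intervals
        ((hmL.mul hf).intervalIntegrable 0 t) ((hmL.mul hf).intervalIntegrable t 1)
    linarith
  have hUd : ∀ τ : ℝ, HasStrictDerivAt U ((mH τ - mL τ) * f τ) τ := by
    intro τ
    have h1 := (hmH.mul hf).integral_hasStrictDerivAt 0 τ
    have h2 := (hmL.mul hf).integral_hasStrictDerivAt 0 τ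
    have : HasStrictDerivAt (fun t => (∫ s in (0:ℝ)..t, mH s * f s) +
        ((∫ s in (0:ℝ)..(1:ℝ), mL s * f s) - ∫ s in (0:ℝ)..t, mL s * f s))
        (mH τ * f τ + (0 - mL τ * f τ)) τ :=
      h1.add ((hasStrictDerivAt_const _ _).sub h2)
    have h3 := this.congr_of_eventuallyEq (Filter.Eventually.of_forall fun t => (hU' t).symm)
    have h4 : mH τ * f τ + (0 - mL τ * f τ) = (mH τ - mL τ) * f τ := by ring
    rwa [h4] at h3
  have hCc : Continuous C := continuous_iff_continuousAt.2 fun x => (hCd x).hasDerivAt.continuousAt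
  have hmono : StrictMonoOn C (Set.Ioo a b) := by
    apply strictMonoOn_of_deriv_pos (convex_Ioo a b) hCc.continuousOn
    intro x hx
    rw [interior_Ioo] at hx
    rw [(hCd x).hasDerivAt.deriv]
    exact mul_pos hcH (hfpos x hx)
  refine ⟨hmono, hCc.continuousOn, hmono.injOn.bijOn_image, ?_⟩
  intro g hg τ hτ
  have hfτ : 0 < f τ := hfpos τ hτ
  have hne : cH * f τ ≠ 0 := by positivity
  set φ := (hCd τ).localInverse C (cH * f τ) τ hne with hφ
  have hφC : φ (C τ) = τ :=
    ((hCd τ).hasStrictFDerivAt_equiv hne).localInverse_apply_image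
  have hφcont : ContinuousAt φ (C τ) :=
    ((hCd τ).hasStrictFDerivAt_equiv hne).localInverse_continuousAt
  have hright : ∀ᶠ y in nhds (C τ), C (φ y) = y :=
    ((hCd τ).hasStrictFDerivAt_equiv hne).eventually_right_inverse
  have hmem : ∀ᶠ y in nhds (C τ), φ y ∈ Set.Ioo a b := by
    have : Set.Ioo a b ∈ nhds τ := (isOpen_Ioo).mem_nhds hτ
    have := hφcont.preimage_mem_nhds (by rwa [hφC])
    exact this
  -- g eventually equals U ∘ φ near C τ
  have heq : g =ᶠ[nhds (C τ)] fun y => U (φ y) := by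
    filter_upwards [hright, hmem] with y h1 h2
    have := hg (φ y) h2
    rw [h1] at this
    exact this
  -- U ∘ φ has the right derivative
  have hφd : HasStrictDerivAt φ (cH * f τ)⁻¹ (C τ) := (hCd τ).to_localInverse hne
  have hUτ : HasStrictDerivAt U ((mH τ - mL τ) * f τ) (φ (C τ)) := by
    rw [hφC]; exact hUd τ
  have hcomp : HasStrictDerivAt (fun y => U (φ y))
      (((mH τ - mL τ) * f τ) * (cH * f τ)⁻¹) (C τ) := hUτ.comp (C τ) hφd
  have : HasDerivAt g (((mH τ - mL τ) * f τ) * (cH * f τ)⁻¹) (C τ) :=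
    hcomp.hasDerivAt.congr_of_eventuallyEq heq
  have h5 : ((mH τ - mL τ) * f τ) * (cH * f τ)⁻¹ = (mH τ - mL τ) / cH := by
    field_simp
  rwa [h5] at this
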